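/- Let Σ₄ = {a₁,a₂,a₃,a₄, ā₁,ā₂,ā₃,ā₄, b₁,b₂,b₃,b₄, b̄₁,b̄₂,b̄₃,b̄₄} be an alphabet with 16 letters, and let L₄ = { x₄·x₃·x₂·x₁·x̄₁·x̄₂·x̄₃·x̄₄ : for each i ∈ {1,2,3,4}, (xᵢ, x̄ᵢ) = (aᵢ, āᵢ) or (xᵢ, x̄ᵢ) = (bᵢ, b̄ᵢ) } (a set of 16 words of length 8), and let T₄ = L₄ \ { b₄·b₃·b₂·b₁·b̄₁·b̄₂·b̄₃·b̄₄ } (a set of 15 words). Then T₄ is a test set for L₄: for any alphabet Γ and any two monoid homomorphisms f, g : Σ₄* → Γ*, if f(w) = g(w) for every w ∈ T₄, then f(w) = g(w) for every w ∈ L₄. -/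

import Mathlib

namespace TestSet

section WordLemmas

open FreeGroup

variable {β : Type} [DecidableEq β]

lemma of_eq_mk (b : β) : FreeGroup.of b = FreeGroup.mk [(b, true)] := rfl

lemma inv_of_eq_mk (b : β) : (FreeGroup.of b)⁻¹ = FreeGroup.mk [(b, false)] := by
  rw [of_eq_mk, FreeGroup.inv_mk]
  simp [FreeGroup.invRev]

lemma toWord_cons (x : β × Bool) (z : FreeGroup β) :
    (FreeGroup.mk [x] * z).toWord =
      List.casesOn z.toWord [x] fun hd tl =>
        if x.1 = hd.1 ∧ x.2 = !hd.2 then tl else x :: hd :: tl := by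
  conv_lhs => rw [← FreeGroup.mk_toWord (x := z)]
  rw [FreeGroup.mul_mk, List.singleton_append, FreeGroup.toWord_mk, FreeGroup.reduce.cons,
    FreeGroup.reduce_toWord]

lemma toWord_of_mul_cancel {z : FreeGroup β} {b : β} {tl : List (β × Bool)}
    (h : z.toWord = (b, false) :: tl) : (FreeGroup.of b * z).toWord = tl := by
  rw [of_eq_mk, toWord_cons, h]
  simp

lemma toWord_inv_of_mul_cancel {z : FreeGroup β} {b : β} {tl : List (β × Bool)}
    (h : z.toWord = (b, true) :: tl) : ((FreeGroup.of b)⁻¹ * z).toWord = tl := by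
  rw [inv_of_eq_mk, toWord_cons, h]
  simp

lemma toWord_of_mul_nc {z : FreeGroup β} {b : β}
    (h : ∀ tl, z.toWord ≠ (b, false) :: tl) :
    (FreeGroup.of b * z).toWord = (b, true) :: z.toWord := by
  rw [of_eq_mk, toWord_cons]
  rcases hz : z.toWord with _ | ⟨⟨c, e⟩, tl⟩
  · rfl
  · have : ¬(b = c ∧ true = !e) := by
      rintro ⟨rfl, he⟩
      cases e
      · exact h tl hz
      · simp at he
    simp only [this, if_false]

/-- Centralizer of a generator: any element commuting with `of b` is a power of it. -/
theorem eq_zpow_of_commute_of_aux {b : β} :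
    ∀ (n : ℕ) (z : FreeGroup β), z.toWord.length = n → Commute z (FreeGroup.of b) →
      ∃ m : ℤ, z = FreeGroup.of b ^ m := by
  intro n
  induction n using Nat.strong_induction_on with
  | _ n ih =>
  intro z hn hc
  rcases hL : z.toWord with _ | ⟨⟨c, e⟩, tl⟩
  · exact ⟨0, by rw [FreeGroup.toWord_eq_nil_iff.mp hL, zpow_zero]⟩
  by_cases hbc : c = b
  · subst hbc
    cases e
    · -- head (c, false) : consider z' = of c * z
      have h1 : (FreeGroup.of c * z).toWord = tl := toWord_of_mul_cancel hL
      have hlen : tl.length < n := by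
        rw [← hn, hL]; simp
      have hc' : Commute (FreeGroup.of c * z) (FreeGroup.of c) :=
        (Commute.refl (FreeGroup.of c)).mul_left hc
      obtain ⟨m, hm⟩ := ih tl.length hlen (FreeGroup.of c * z) (by rw [h1]) hc'
      exact ⟨m - 1, by
        have : z = (FreeGroup.of c)⁻¹ * (FreeGroup.of c * z) := by group
        rw [this, hm]
        group⟩
    · -- head (c, true) : consider z' = (of c)⁻¹ * z
      have h1 : ((FreeGroup.of c)⁻¹ * z).toWord = tl := toWord_inv_of_mul_cancel hL
      have hlen : tl.length < n := by
        rw [← hn, hL]; simp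
      have hc' : Commute ((FreeGroup.of c)⁻¹ * z) (FreeGroup.of c) :=
        ((Commute.refl (FreeGroup.of c)).inv_left).mul_left hc
      obtain ⟨m, hm⟩ := ih tl.length hlen _ (by rw [h1]) hc'
      exact ⟨m + 1, by
        have : z = (FreeGroup.of c) * ((FreeGroup.of c)⁻¹ * z) := by group
        rw [this, hm]
        group⟩
  · -- head letter differs from b : contradiction
    exfalso
    have h1 : (FreeGroup.of b * z).toWord = (b, true) :: z.toWord := by
      apply toWord_of_mul_nc
      intro tl' hww
      rw [hL] at hww
      apply hbc
      have := congrArg (List.head? ·) hww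
      simp at this
      exact this.1
    -- also compute toWord of z * of b via inverses
    have h2 : (z * FreeGroup.of b) = (FreeGroup.of b * z) := hc.eq
    -- (z * of b)⁻¹ = (of b)⁻¹ * z⁻¹
    have hz : z⁻¹.toWord = FreeGroup.invRev z.toWord := FreeGroup.toWord_inv z
    -- case on head of z⁻¹.toWord
    rcases hK : z⁻¹.toWord with _ | ⟨⟨d, e'⟩, tl'⟩
    · -- z = 1 contradiction with hL
      have : z = 1 := by
        have := FreeGroup.toWord_eq_nil_iff.mp hK
        simpa using congrArg (·⁻¹) this
      rw [this] at hL; simp [FreeGroup.toWord_one] at hL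
    · by_cases hdb : d = b ∧ e' = true
      · -- cancellation: |(of b)⁻¹ * z⁻¹| = |z| - 1, but equals |of b * z| = |z|+1
        obtain ⟨rfl, rfl⟩ := hdb
        have h3 : ((FreeGroup.of d)⁻¹ * z⁻¹).toWord = tl' := toWord_inv_of_mul_cancel hK
        have h4 : (FreeGroup.of d * z)⁻¹ = (FreeGroup.of d)⁻¹ * z⁻¹ := by
          rw [← h2]; group
        have hlen1 : ((FreeGroup.of d * z)⁻¹).toWord.length = tl'.length := by rw [h4, h3]
        have hlen2 : ((FreeGroup.of d * z)⁻¹).toWord.length = z.toWord.length + 1 := by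
          rw [FreeGroup.toWord_inv, FreeGroup.invRev_length, h1]
          simp
        have : z⁻¹.toWord.length = z.toWord.length := by
          rw [FreeGroup.toWord_inv, FreeGroup.invRev_length]
        rw [hlen2] at hlen1
        rw [hK] at this
        simp at this
        omega
      · -- no cancellation: (of b)⁻¹ * z⁻¹ has toWord (b,false) :: z⁻¹.toWord
        have h3 : ((FreeGroup.of b)⁻¹ * z⁻¹).toWord = (b, false) :: z⁻¹.toWord := by
          rw [inv_of_eq_mk, toWord_cons]
          rw [hK]
          have : ¬(b = d ∧ false = !e') := by
            rintro ⟨rfl, hee⟩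
            cases e'
            · simp at hee
            · exact hdb ⟨rfl, rfl⟩
          simp only [this, if_false]
        -- then z * of b = ((of b)⁻¹ * z⁻¹)⁻¹ has toWord invRev ((b,false) :: z⁻¹.toWord)
        have h4 : (z * FreeGroup.of b).toWord = FreeGroup.invRev ((b, false) :: z⁻¹.toWord) := by
          have : (z * FreeGroup.of b) = ((FreeGroup.of b)⁻¹ * z⁻¹)⁻¹ := by group
          rw [this, FreeGroup.toWord_inv, h3]
        have hcons : ∀ (x : β × Bool) (L : List (β × Bool)),
            FreeGroup.invRev (x :: L) = FreeGroup.invRev L ++ [(x.1, !x.2)] := by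
          intro x L
          simp [FreeGroup.invRev]
        have h5 : FreeGroup.invRev ((b, false) :: z⁻¹.toWord) = z.toWord ++ [(b, true)] := by
          rw [hz, hcons, FreeGroup.invRev_invRev]
          rfl
        rw [h2, h1] at h4
        rw [h5] at h4
        -- (b,true) :: z.toWord = z.toWord ++ [(b,true)], compare heads: head of z.toWord is (c,e) with c ≠ b
        rw [hL] at h4
        have hh := congrArg (List.head? ·) h4
        simp at hh
        exact hbc hh.1.symm

theorem eq_zpow_of_commute_of {b : β} (z : FreeGroup β) (h : Commute z (FreeGroup.of b)) :
    ∃ m : ℤ, z = FreeGroup.of b ^ m :=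
  eq_zpow_of_commute_of_aux z.toWord.length z rfl h


-- counting homomorphism
def expCount (b : β) : FreeGroup β →* Multiplicative ℤ :=
  FreeGroup.lift (fun c => Multiplicative.ofAdd (if c = b then (1 : ℤ) else 0))

lemma expCount_of (b c : β) :
    expCount b (FreeGroup.of c) = Multiplicative.ofAdd (if c = b then (1 : ℤ) else 0) := by
  simp [expCount]

lemma expCount_of_zpow_self (b : β) (n : ℤ) :
    expCount b (FreeGroup.of b ^ n) = Multiplicative.ofAdd n := by
  rw [map_zpow, expCount_of, if_pos rfl, ← ofAdd_zsmul]
  simp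

lemma of_zpow_eq_one_iff (b : β) (n : ℤ) (h : FreeGroup.of b ^ n = 1) : n = 0 := by
  have h2 := congrArg (expCount b) h
  rw [expCount_of_zpow_self, MonoidHom.map_one] at h2
  simpa using congrArg Multiplicative.toAdd h2

lemma commute_subtype_iff {G : Type*} [Group G] {H : Subgroup G} {x y : H} :
    Commute x y ↔ Commute (x : G) (y : G) := by
  unfold Commute SemiconjBy
  rw [← Subgroup.coe_mul, ← Subgroup.coe_mul]
  exact ⟨fun h => by rw [h], fun h => Subtype.ext h⟩


omit [DecidableEq β] in
/-- In a free group, every subsingleton-generated free group is commutative. -/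
lemma subsingleton_commute [Subsingleton β] (x y : FreeGroup β) : Commute x y := by
  induction x using FreeGroup.induction_on with
  | C1 => exact Commute.one_left y
  | of a =>
    induction y using FreeGroup.induction_on with
    | C1 => exact Commute.one_right _
    | of c => rw [Subsingleton.elim a c]
    | inv_of c ih => exact ih.inv_right
    | mul u v hu hv => exact hu.mul_right hv
  | inv_of a ih => exact ih.inv_left
  | mul u v hu hv => exact hu.mul_left hv

omit [DecidableEq β] in
/-- The centralizer of a nontrivial element of a free group is abelian (commutative
transitivity). -/
theorem CT {a x y : FreeGroup β} (ha : a ≠ 1)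
    (hx : Commute x a) (hy : Commute y a) : Commute x y := by
  classical
  set H : Subgroup (FreeGroup β) := Subgroup.centralizer {a} with hH
  have hmem : ∀ {w : FreeGroup β}, Commute w a → w ∈ H := by
    intro w hw
    rw [hH, Subgroup.mem_centralizer_iff]
    rintro m ⟨rfl⟩
    exact hw.symm.eq
  have haH : a ∈ H := hmem (Commute.refl a)
  -- the element a is central in H and nontrivial
  set z : H := ⟨a, haH⟩ with hz
  have hzne : z ≠ 1 := by
    intro hzz
    exact ha (congrArg Subtype.val hzz)
  have hcentral : ∀ w : H, Commute z w := by
    intro w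
    rw [commute_subtype_iff]
    have := w.2 a rfl
    unfold Commute SemiconjBy
    simp only [hz]
    rw [this]
  -- H is a free group; transfer to FreeGroup (Generators H)
  letI : IsFreeGroup H := inferInstance
  letI : DecidableEq (IsFreeGroup.Generators H) := Classical.decEq _
  set e : H ≃* FreeGroup (IsFreeGroup.Generators H) := IsFreeGroup.toFreeGroup H with he
  have hz' : e z ≠ 1 := by
    intro hh
    exact hzne (by simpa using congrArg e.symm hh)
  have hcentral' : ∀ w : FreeGroup (IsFreeGroup.Generators H), Commute (e z) w := by
    intro w
    have := hcentral (e.symm w)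
    have h2 := this.map e.toMonoidHom
    simpa using h2
  -- z is a power of every generator; two distinct generators give a contradiction
  have hsub : Subsingleton (IsFreeGroup.Generators H) := by
    constructor
    intro s t
    by_contra hst
    obtain ⟨n, hn⟩ := eq_zpow_of_commute_of (e z) (hcentral' (FreeGroup.of s))
    obtain ⟨m, hm⟩ := eq_zpow_of_commute_of (e z) (hcentral' (FreeGroup.of t))
    have hn0 : n ≠ 0 := by
      intro h0
      rw [h0, zpow_zero] at hn
      exact hz' hn
    have := congrArg (expCount t) hn
    rw [hm, expCount_of_zpow_self, map_zpow, expCount_of] at this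
    have : Multiplicative.ofAdd m = Multiplicative.ofAdd ((0 : ℤ) * n) := by
      simpa [hst, if_neg (Ne.symm hst)] using this
    have hm0 : m = 0 := by simpa using congrArg Multiplicative.toAdd this
    rw [hm0, zpow_zero] at hm
    exact hz' hm
  -- hence FreeGroup (Generators H) is abelian, so H is abelian
  have hx' : x ∈ H := hmem hx
  have hy' : y ∈ H := hmem hy
  have : Commute (e ⟨x, hx'⟩) (e ⟨y, hy'⟩) := subsingleton_commute _ _
  have h2 : Commute (⟨x, hx'⟩ : H) (⟨y, hy'⟩ : H) := by
    have := this.map e.symm.toMonoidHom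
    simpa using this
  exact commute_subtype_iff.mp h2


omit [DecidableEq β] in
/-- Centralizers in free groups are cyclic. -/
theorem centralizer_cyclic (g : FreeGroup β) (hg : g ≠ 1) :
    ∃ ρ : FreeGroup β, (∀ x, Commute x g → ∃ n : ℤ, x = ρ ^ n) ∧ Commute ρ g ∧
      (∀ k : ℤ, ρ ^ k = 1 → k = 0) := by
  classical
  set H : Subgroup (FreeGroup β) := Subgroup.centralizer {g} with hH
  have hmem : ∀ {w : FreeGroup β}, Commute w g → w ∈ H := by
    intro w hw
    rw [hH, Subgroup.mem_centralizer_iff]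
    rintro m ⟨rfl⟩
    exact hw.symm.eq
  have hmem' : ∀ {w : FreeGroup β}, w ∈ H → Commute w g := by
    intro w hw
    have := (Subgroup.mem_centralizer_iff.mp hw) g rfl
    unfold Commute SemiconjBy
    rw [this]
  have haH : g ∈ H := hmem (Commute.refl g)
  set z : H := ⟨g, haH⟩ with hz
  have hzne : z ≠ 1 := fun hzz => hg (congrArg Subtype.val hzz)
  letI : IsFreeGroup H := inferInstance
  letI : DecidableEq (IsFreeGroup.Generators H) := Classical.decEq _
  set e : H ≃* FreeGroup (IsFreeGroup.Generators H) := IsFreeGroup.toFreeGroup H with he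
  have hz' : e z ≠ 1 := fun hh => hzne (by simpa using congrArg e.symm hh)
  have hsub : Subsingleton (IsFreeGroup.Generators H) := by
    constructor
    intro s t
    by_contra hst
    have hcs : Commute (e z) (FreeGroup.of s) := by
      have h1 : Commute z (e.symm (FreeGroup.of s)) :=
        commute_subtype_iff.mpr (CT hg (hmem' z.2) (hmem' (e.symm (FreeGroup.of s)).2))
      have := h1.map e.toMonoidHom
      simpa using this
    have hct : Commute (e z) (FreeGroup.of t) := by
      have h1 : Commute z (e.symm (FreeGroup.of t)) :=
        commute_subtype_iff.mpr (CT hg (hmem' z.2) (hmem' (e.symm (FreeGroup.of t)).2))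
      have := h1.map e.toMonoidHom
      simpa using this
    obtain ⟨n, hn⟩ := eq_zpow_of_commute_of (e z) hcs
    obtain ⟨m, hm⟩ := eq_zpow_of_commute_of (e z) hct
    have hn0 : n ≠ 0 := by
      intro h0
      rw [h0, zpow_zero] at hn
      exact hz' hn
    -- apply the counting hom at t to hn and hm
    have hcount := congrArg (FreeGroup.lift
      (fun c => Multiplicative.ofAdd (if c = t then (1 : ℤ) else 0))) (hn.symm.trans hm)
    rw [map_zpow, map_zpow, FreeGroup.lift_apply_of, FreeGroup.lift_apply_of, if_pos rfl,
      if_neg hst] at hcount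
    have : (0 : ℤ) = m := by
      have h2 := congrArg Multiplicative.toAdd hcount
      simpa [← ofAdd_zsmul] using h2
    rw [← this, zpow_zero] at hm
    exact hz' hm
  -- pick the generator
  have hSne : Nonempty (IsFreeGroup.Generators H) := by
    rcases hw : (e z).toWord with _ | ⟨⟨s, b⟩, tl⟩
    · exact absurd (FreeGroup.toWord_eq_nil_iff.mp hw) hz'
    · exact ⟨s⟩
  obtain ⟨s₀⟩ := hSne
  refine ⟨((e.symm (FreeGroup.of s₀)) : H), ?_, ?_, ?_⟩
  · intro x hx
    have hxH : x ∈ H := hmem hx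
    obtain ⟨n, hn⟩ := eq_zpow_of_commute_of (e ⟨x, hxH⟩)
      (subsingleton_commute (e ⟨x, hxH⟩) (FreeGroup.of s₀))
    refine ⟨n, ?_⟩
    have : (⟨x, hxH⟩ : H) = (e.symm (FreeGroup.of s₀)) ^ n := by
      have := congrArg e.symm hn
      rw [map_zpow] at this
      simpa using this
    have := congrArg Subtype.val this
    simpa using this
  · exact hmem' (e.symm (FreeGroup.of s₀)).2
  · intro k hk
    have : ((e.symm (FreeGroup.of s₀)) ^ k : H) = 1 := by
      apply Subtype.ext
      simpa using hk
    have h3 := congrArg e this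
    rw [map_zpow] at h3
    have h9 : e (1 : H) = 1 := map_one e
    rw [h9] at h3
    simp only [MulEquiv.apply_symm_apply] at h3
    exact of_zpow_eq_one_iff s₀ k h3

omit [DecidableEq β] in
/-- Free groups are torsion-free. -/
theorem zpow_eq_one_imp {x : FreeGroup β} {n : ℤ} (hn : n ≠ 0) (h : x ^ n = 1) : x = 1 := by
  by_contra hx
  obtain ⟨ρ, hpow, _, hinj⟩ := centralizer_cyclic x hx
  obtain ⟨m, hm⟩ := hpow x (Commute.refl x)
  have hm0 : m ≠ 0 := by
    intro h0
    rw [h0, zpow_zero] at hm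
    exact hx hm
  rw [hm, ← zpow_mul] at h
  have h2 := hinj _ h
  rcases mul_eq_zero.mp h2 with h3 | h3
  · exact hm0 h3
  · exact hn h3

omit [DecidableEq β] in
/-- Key lemma: if a conjugate of `g` commutes with `g`, the conjugator commutes with `g`. -/
theorem conj_commute_imp_commute {g x : FreeGroup β} (hg : g ≠ 1)
    (h : Commute (x * g * x⁻¹) g) : Commute x g := by
  obtain ⟨ρ, hpow, hρg, hinj⟩ := centralizer_cyclic g hg
  obtain ⟨k, hk⟩ := hpow g (Commute.refl g)
  have hρ1 : ρ ≠ 1 := by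
    intro h1
    rw [h1, one_zpow] at hk
    exact hg hk
  -- main claim : Commute x ρ suffices? no, we show Commute x π for π the root of ρ
  obtain ⟨π, hπpow, hπρ, hπinj⟩ := centralizer_cyclic ρ hρ1
  obtain ⟨v, hv⟩ := hπpow ρ (Commute.refl ρ)
  have hπ1 : π ≠ 1 := by
    intro h1
    rw [h1, one_zpow] at hv
    exact hρ1 hv
  -- conjugation helpers
  have conjC : ∀ (w a b : FreeGroup β), Commute a b → Commute (w * a * w⁻¹) (w * b * w⁻¹) := by
    intro w a b hab
    have := hab.map (MulAut.conj w).toMonoidHom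
    simpa [MulAut.conj_apply, mul_assoc] using this
  have conjZ : ∀ (w a : FreeGroup β) (m : ℤ), w * a ^ m * w⁻¹ = (w * a * w⁻¹) ^ m := by
    intro w a m
    have := map_zpow (MulAut.conj w) a m
    simpa [MulAut.conj_apply, mul_assoc] using this
  have conj_ne_one : ∀ (w a : FreeGroup β), a ≠ 1 → w * a * w⁻¹ ≠ 1 := by
    intro w a ha hh
    apply ha
    have := congrArg (fun u => w⁻¹ * u * w) hh
    simpa [mul_assoc] using this
  set σ := x * ρ * x⁻¹ with hσdef
  set τ := x⁻¹ * ρ * x with hτdef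
  have hxg1 : x * g * x⁻¹ ≠ 1 := conj_ne_one x g hg
  have hA : Commute (x * g * x⁻¹) ρ := CT hg h hρg
  have hB : x * g * x⁻¹ = σ ^ k := by rw [hk, hσdef, conjZ]
  have hσxg : Commute σ (x * g * x⁻¹) := by rw [hB]; exact (Commute.refl σ).zpow_right k
  have hσρ : Commute σ ρ := CT hxg1 hσxg hA.symm
  have hσ1 : σ ≠ 1 := conj_ne_one x ρ hρ1
  -- mirrored versions with x⁻¹
  have h' : Commute (x⁻¹ * g * x) g := by
    have h2 := (conjC x⁻¹ _ _ h).symm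
    have e1 : x⁻¹ * (x * g * x⁻¹) * x⁻¹⁻¹ = g := by group
    have e2 : x⁻¹ * g * x⁻¹⁻¹ = x⁻¹ * g * x := by group
    rw [e1, e2] at h2
    exact h2
  have hxg1' : x⁻¹ * g * x ≠ 1 := by
    have := conj_ne_one x⁻¹ g hg
    simpa using this
  have hA' : Commute (x⁻¹ * g * x) ρ := CT hg h' hρg
  have hB' : x⁻¹ * g * x = τ ^ k := by
    rw [hk, hτdef]
    have := conjZ x⁻¹ ρ k
    simpa using this
  have hτxg : Commute τ (x⁻¹ * g * x) := by rw [hB']; exact (Commute.refl τ).zpow_right k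
  have hτρ : Commute τ ρ := CT hxg1' hτxg hA'.symm
  have hτ1 : τ ≠ 1 := by
    have := conj_ne_one x⁻¹ ρ hρ1
    simpa using this
  -- x π x⁻¹ and x⁻¹ π x are powers of π
  have hπσ : Commute (x * π * x⁻¹) σ := conjC x π ρ hπρ
  have hπρ' : Commute (x * π * x⁻¹) ρ := CT hσ1 hπσ hσρ.symm
  obtain ⟨p, hp⟩ := hπpow _ hπρ'
  have hπτ : Commute (x⁻¹ * π * x) τ := by
    have := conjC x⁻¹ π ρ hπρ
    simpa [hτdef] using this
  have hπρ'' : Commute (x⁻¹ * π * x) ρ := CT hτ1 hπτ hτρ.symm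
  obtain ⟨q, hq⟩ := hπpow _ hπρ''
  -- π = (x⁻¹ π x)^p = π^(q*p)
  have hqp : π = π ^ (q * p) := by
    have e2 := conjZ x⁻¹ π p
    simp only [inv_inv] at e2
    calc π = x⁻¹ * (x * π * x⁻¹) * x := by group
      _ = x⁻¹ * π ^ p * x := by rw [hp]
      _ = (x⁻¹ * π * x) ^ p := e2
      _ = (π ^ q) ^ p := by rw [hq]
      _ = π ^ (q * p) := by rw [← zpow_mul]
  have hqp1 : q * p = 1 := by
    have h2 : π ^ (q * p - 1) = 1 := by
      rw [zpow_sub, zpow_one, ← hqp]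
      group
    have := hπinj _ h2
    omega
  have hcomm_x_π : Commute x π := by
    rcases Int.mul_eq_one_iff_eq_one_or_neg_one.mp hqp1 with ⟨hq1, hp1⟩ | ⟨hq1, hp1⟩
    · -- p = 1 : x π x⁻¹ = π
      rw [hp1, zpow_one] at hp
      have : x * π = π * x := by
        have := congrArg (fun u => u * x) hp
        simpa [mul_assoc] using this
      exact this
    · -- p = -1 : x π x⁻¹ = π⁻¹
      rw [hp1] at hp
      simp only [zpow_neg, zpow_one] at hp
      have hx2 : (x * x) * π * (x * x)⁻¹ = π := by
        calc (x * x) * π * (x * x)⁻¹ = x * (x * π * x⁻¹) * x⁻¹ := by group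
          _ = x * π⁻¹ * x⁻¹ := by rw [hp]
          _ = (x * π * x⁻¹)⁻¹ := by group
          _ = π⁻¹⁻¹ := by rw [hp]
          _ = π := inv_inv π
      by_cases hx21 : x * x = 1
      · have hxx : x ^ (2 : ℤ) = 1 := by
          rw [zpow_two, hx21]
        have : x = 1 := zpow_eq_one_imp (by norm_num) hxx
        rw [this]
        exact Commute.one_left π
      · have hc1 : Commute (x * x) π := by
          have h5 := congrArg (fun u => u * (x * x)) hx2
          simp only [inv_mul_cancel_right] at h5
          exact h5
        have hc2 : Commute x (x * x) := (Commute.refl x).mul_right (Commute.refl x)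
        have hc3 : Commute x π := CT hx21 hc2 hc1.symm
        exfalso
        have h6 : π = π⁻¹ := by
          rw [← hp]
          rw [hc3.eq]
          group
        have hππ : π ^ (2 : ℤ) = 1 := by
          rw [zpow_two]
          nth_rewrite 2 [h6]
          group
        exact hπ1 (zpow_eq_one_imp (by norm_num) hππ)
  -- conclude : g = π^(v*k)
  have hgπ : g = π ^ (v * k) := by rw [hk, hv, ← zpow_mul]
  rw [hgπ]
  exact hcomm_x_π.zpow_right (v * k)


end WordLemmas

/-- Two sandwiched equations give an intertwining relation. -/
lemma sandwich {G : Type*} [Group G] {p0 p1 q0 q1 p0' p1' q0' q1' m m' : G}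
    (h0 : p0 * m * q0 = p0' * m' * q0') (h1 : p1 * m * q1 = p1' * m' * q1') :
    (p0⁻¹ * p0' * p1'⁻¹ * p1) * m = m * (q0 * q0'⁻¹ * q1' * q1⁻¹) := by
  have h2 : (p1' * p0'⁻¹) * (p0 * m * q0) * (q0'⁻¹ * q1') = p1 * m * q1 := by
    rw [h0, h1]
    group
  calc (p0⁻¹ * p0' * p1'⁻¹ * p1) * m
      = (p0⁻¹ * p0' * p1'⁻¹) * (p1 * m * q1) * q1⁻¹ := by group
    _ = (p0⁻¹ * p0' * p1'⁻¹) * ((p1' * p0'⁻¹) * (p0 * m * q0) * (q0'⁻¹ * q1')) * q1⁻¹ := by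
        rw [h2]
    _ = m * (q0 * q0'⁻¹ * q1' * q1⁻¹) := by group

/-- Converse direction of `sandwich`. -/
lemma sandwich_rev {G : Type*} [Group G] {p0 p1 q0 q1 p0' p1' q0' q1' m m' : G}
    (h0 : p0 * m * q0 = p0' * m' * q0')
    (hA : (p0⁻¹ * p0' * p1'⁻¹ * p1) * m = m * (q0 * q0'⁻¹ * q1' * q1⁻¹)) :
    p1 * m * q1 = p1' * m' * q1' := by
  calc p1 * m * q1
      = (p1' * p0'⁻¹ * p0) * ((p0⁻¹ * p0' * p1'⁻¹ * p1) * m) * q1 := by group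
    _ = (p1' * p0'⁻¹ * p0) * (m * (q0 * q0'⁻¹ * q1' * q1⁻¹)) * q1 := by rw [hA]
    _ = p1' * p0'⁻¹ * (p0 * m * q0) * (q0'⁻¹ * q1') := by group
    _ = p1' * p0'⁻¹ * (p0' * m' * q0') * (q0'⁻¹ * q1') := by rw [h0]
    _ = p1' * m' * q1' := by group

theorem core {G : Type*} [Group G]
    (hCT : ∀ {a x y : G}, a ≠ 1 → Commute x a → Commute y a → Commute x y)
    (hK : ∀ {a x : G}, a ≠ 1 → Commute (x * a * x⁻¹) a → Commute x a)
    (P3 P2 P1 P0 Q0 Q1 Q2 Q3 P3' P2' P1' P0' Q0' Q1' Q2' Q3' : Bool → G)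
    (hE : ∀ c3 c2 c1 c0 : Bool, ¬(c3 = true ∧ c2 = true ∧ c1 = true ∧ c0 = true) →
      P3 c3 * P2 c2 * P1 c1 * P0 c0 * Q0 c0 * Q1 c1 * Q2 c2 * Q3 c3 =
      P3' c3 * P2' c2 * P1' c1 * P0' c0 * Q0' c0 * Q1' c1 * Q2' c2 * Q3' c3) :
    P3 true * P2 true * P1 true * P0 true * Q0 true * Q1 true * Q2 true * Q3 true =
    P3' true * P2' true * P1' true * P0' true * Q0' true * Q1' true * Q2' true * Q3' true := by
  set A : G := (P3 false)⁻¹ * P3' false * (P3' true)⁻¹ * P3 true with hAdef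
  set Z : G := Q3 false * (Q3' false)⁻¹ * Q3' true * (Q3 true)⁻¹ with hZdef
  set M : Bool → Bool → Bool → G :=
    fun c2 c1 c0 => P2 c2 * P1 c1 * P0 c0 * Q0 c0 * Q1 c1 * Q2 c2 with hMdef
  set M' : Bool → Bool → Bool → G :=
    fun c2 c1 c0 => P2' c2 * P1' c1 * P0' c0 * Q0' c0 * Q1' c1 * Q2' c2 with hM'def
  have hE' : ∀ c3 c2 c1 c0 : Bool, ¬(c3 = true ∧ c2 = true ∧ c1 = true ∧ c0 = true) →
      P3 c3 * M c2 c1 c0 * Q3 c3 = P3' c3 * M' c2 c1 c0 * Q3' c3 := by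
    intro c3 c2 c1 c0 hne
    have h8 := hE c3 c2 c1 c0 hne
    simp only [hMdef, hM'def]
    simp only [mul_assoc] at h8 ⊢
    exact h8
  have hAM : ∀ c2 c1 c0 : Bool, ¬(c2 = true ∧ c1 = true ∧ c0 = true) →
      A * M c2 c1 c0 = M c2 c1 c0 * Z := by
    intro c2 c1 c0 hne
    exact sandwich (hE' false c2 c1 c0 (by simp)) (hE' true c2 c1 c0 (by tauto))
  -- it suffices to prove the intertwining relation at (true, true, true)
  suffices hAMtt : A * M true true true = M true true true * Z by
    have hfin := sandwich_rev (hE' false true true true (by simp)) hAMtt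
    simp only [hMdef, hM'def] at hfin
    simp only [mul_assoc] at hfin ⊢
    exact hfin
  by_cases hA1 : A = 1
  · have hZ1 : Z = 1 := by
      have h9 := hAM false false false (by simp)
      rw [hA1, one_mul] at h9
      exact (left_eq_mul.mp h9)
    rw [hA1, hZ1, one_mul, mul_one]
  · -- A ≠ 1
    have commMM : ∀ a b c a' b' c' : Bool, ¬(a = true ∧ b = true ∧ c = true) →
        ¬(a' = true ∧ b' = true ∧ c' = true) →
        Commute (M a b c * (M a' b' c')⁻¹) A := by
      intro a b c a' b' c' h h'
      have h1 := hAM a b c h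
      have h2 := hAM a' b' c' h'
      unfold Commute SemiconjBy
      symm
      calc A * (M a b c * (M a' b' c')⁻¹)
          = (A * M a b c) * (M a' b' c')⁻¹ := by group
        _ = M a b c * Z * (M a' b' c')⁻¹ := by rw [h1]
        _ = (M a b c * (M a' b' c')⁻¹) * (M a' b' c' * Z * (M a' b' c')⁻¹) := by group
        _ = (M a b c * (M a' b' c')⁻¹) * (A * M a' b' c' * (M a' b' c')⁻¹) := by rw [← h2]
        _ = (M a b c * (M a' b' c')⁻¹) * A := by group
    set W1 : G := P0 true * Q0 true * (Q0 false)⁻¹ * (P0 false)⁻¹ with hW1def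
    have gEq : ∀ b2 b1 : Bool, M b2 b1 true * (M b2 b1 false)⁻¹ =
        (P2 b2 * P1 b1) * W1 * (P2 b2 * P1 b1)⁻¹ := by
      intro b2 b1
      simp only [hMdef, hW1def]
      group
    have hg : ∀ b2 b1 : Bool, ¬(b2 = true ∧ b1 = true) →
        Commute ((P2 b2 * P1 b1) * W1 * (P2 b2 * P1 b1)⁻¹) A := by
      intro b2 b1 hbb
      rw [← gEq b2 b1]
      exact commMM b2 b1 true b2 b1 false (by tauto) (by simp)
    -- we must show that the conjugate of W1 by (P2 true * P1 true) also commutes with A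
    have hg6A : Commute ((P2 true * P1 true) * W1 * (P2 true * P1 true)⁻¹) A := by
      by_cases hW1' : W1 = 1
      · rw [hW1']
        simp only [mul_one, mul_inv_cancel]
        exact Commute.one_left A
      · have hg1A := hg false false (by simp)
        have hg2A := hg false true (by simp)
        have hg3A := hg true false (by simp)
        have hg1ne : (P2 false * P1 false) * W1 * (P2 false * P1 false)⁻¹ ≠ 1 := by
          intro hh
          apply hW1'
          have := congrArg (fun u => (P2 false * P1 false)⁻¹ * u * (P2 false * P1 false)) hh
          simpa [mul_assoc] using this
        -- k1 conjugates g1 to g2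
        have keq1 : ((P2 false * P1 true) * (P2 false * P1 false)⁻¹) *
            ((P2 false * P1 false) * W1 * (P2 false * P1 false)⁻¹) *
            ((P2 false * P1 true) * (P2 false * P1 false)⁻¹)⁻¹ =
            (P2 false * P1 true) * W1 * (P2 false * P1 true)⁻¹ := by group
        have hc21 : Commute ((P2 false * P1 true) * W1 * (P2 false * P1 true)⁻¹)
            ((P2 false * P1 false) * W1 * (P2 false * P1 false)⁻¹) := hCT hA1 hg2A hg1A
        have hk1 : Commute ((P2 false * P1 true) * (P2 false * P1 false)⁻¹)
            ((P2 false * P1 false) * W1 * (P2 false * P1 false)⁻¹) := by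
          apply hK hg1ne
          rw [keq1]
          exact hc21
        -- k2 conjugates g1 to g3
        have keq2 : (P2 true * (P2 false)⁻¹) *
            ((P2 false * P1 false) * W1 * (P2 false * P1 false)⁻¹) *
            (P2 true * (P2 false)⁻¹)⁻¹ =
            (P2 true * P1 false) * W1 * (P2 true * P1 false)⁻¹ := by group
        have hc31 : Commute ((P2 true * P1 false) * W1 * (P2 true * P1 false)⁻¹)
            ((P2 false * P1 false) * W1 * (P2 false * P1 false)⁻¹) := hCT hA1 hg3A hg1A
        have hk2 : Commute (P2 true * (P2 false)⁻¹)
            ((P2 false * P1 false) * W1 * (P2 false * P1 false)⁻¹) := by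
          apply hK hg1ne
          rw [keq2]
          exact hc31
        have hk21 : Commute ((P2 true * (P2 false)⁻¹) *
            ((P2 false * P1 true) * (P2 false * P1 false)⁻¹))
            ((P2 false * P1 false) * W1 * (P2 false * P1 false)⁻¹) := hk2.mul_left hk1
        have g6eq : ((P2 true * (P2 false)⁻¹) * ((P2 false * P1 true) * (P2 false * P1 false)⁻¹)) *
            ((P2 false * P1 false) * W1 * (P2 false * P1 false)⁻¹) *
            ((P2 true * (P2 false)⁻¹) * ((P2 false * P1 true) * (P2 false * P1 false)⁻¹))⁻¹ =
            (P2 true * P1 true) * W1 * (P2 true * P1 true)⁻¹ := by group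
        have hg6eq : (P2 true * P1 true) * W1 * (P2 true * P1 true)⁻¹ =
            (P2 false * P1 false) * W1 * (P2 false * P1 false)⁻¹ := by
          rw [← g6eq, hk21.eq]
          group
        rw [hg6eq]
        exact hg1A
    -- conclude
    have hMsplit : M true true true =
        ((P2 true * P1 true) * W1 * (P2 true * P1 true)⁻¹) * M true true false := by
      simp only [hMdef, hW1def]
      group
    have httf := hAM true true false (by simp)
    calc A * M true true true
        = A * (((P2 true * P1 true) * W1 * (P2 true * P1 true)⁻¹) * M true true false) := by
          rw [← hMsplit]
      _ = (((P2 true * P1 true) * W1 * (P2 true * P1 true)⁻¹)) * (A * M true true false) := by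
          rw [← mul_assoc, ← hg6A.eq, mul_assoc]
      _ = (((P2 true * P1 true) * W1 * (P2 true * P1 true)⁻¹)) * (M true true false * Z) := by
          rw [httf]
      _ = M true true true * Z := by rw [← mul_assoc, ← hMsplit, mul_assoc]
      

section Iota

variable {β : Type} [DecidableEq β]

/-- The canonical monoid embedding of a free monoid into the free group. -/
def iota (Γ : Type) : FreeMonoid Γ →* FreeGroup Γ := FreeMonoid.lift FreeGroup.of

lemma iota_toWord (l : List β) :
    ((iota β) (FreeMonoid.ofList l)).toWord = l.map (fun a => (a, true)) := by
  induction l with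
  | nil =>
    show ((iota β) 1).toWord = []
    rw [MonoidHom.map_one, FreeGroup.toWord_one]
  | cons a l ih =>
    rw [FreeMonoid.ofList_cons, MonoidHom.map_mul]
    have : (iota β) (FreeMonoid.of a) = FreeGroup.of a := FreeMonoid.lift_eval_of _ _
    rw [this]
    rw [toWord_of_mul_nc, ih]
    · rfl
    · intro tl hc
      rw [ih] at hc
      cases l with
      | nil => simp at hc
      | cons b l' => simp at hc

lemma iota_injective (Γ : Type) : Function.Injective (iota Γ) := by
  letI := Classical.decEq Γ
  intro u v huv
  have h2 := congrArg FreeGroup.toWord huv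
  rw [show u = FreeMonoid.ofList (FreeMonoid.toList u) from rfl,
    show v = FreeMonoid.ofList (FreeMonoid.toList v) from rfl, iota_toWord, iota_toWord] at h2
  have h3 : FreeMonoid.toList u = FreeMonoid.toList v := by
    have hinj : Function.Injective (fun a : Γ => (a, true)) := by
      intro x y hxy
      simpa using hxy
    exact List.map_injective_iff.mpr hinj h2
  exact FreeMonoid.toList.injective h3


end Iota

end TestSet

/-- The alphabet `Σ₄` with 16 letters.  A letter `(b?, bar?, i)` represents:
`aᵢ₊₁` if `b? = false, bar? = false`; `āᵢ₊₁` if `b? = false, bar? = true`;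
`bᵢ₊₁` if `b? = true, bar? = false`; `b̄ᵢ₊₁` if `b? = true, bar? = true`. -/
abbrev Sigma4 : Type := Bool × Bool × Fin 4

/-- The word `x₄·x₃·x₂·x₁·x̄₁·x̄₂·x̄₃·x̄₄ ∈ L₄` determined by the choice `s : Fin 4 → Bool`
(`s i = false` means `(xᵢ₊₁, x̄ᵢ₊₁) = (aᵢ₊₁, āᵢ₊₁)`, `s i = true` means
`(xᵢ₊₁, x̄ᵢ₊₁) = (bᵢ₊₁, b̄ᵢ₊₁)`). -/
def word4 (s : Fin 4 → Bool) : FreeMonoid Sigma4 :=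
  FreeMonoid.ofList
    [(s 3, false, 3), (s 2, false, 2), (s 1, false, 1), (s 0, false, 0),
     (s 0, true, 0), (s 1, true, 1), (s 2, true, 2), (s 3, true, 3)]

/-- The language `L₄` of 16 words. -/
def L4 : Set (FreeMonoid Sigma4) := Set.range word4

/-- The set `T₄ = L₄ \ {b₄·b₃·b₂·b₁·b̄₁·b̄₂·b̄₃·b̄₄}` of 15 words. -/
def T4 : Set (FreeMonoid Sigma4) := L4 \ {word4 (fun _ => true)}


namespace TestSet

lemma word4_expand (s : Fin 4 → Bool) :
    word4 s = FreeMonoid.of (s 3, false, 3) * FreeMonoid.of (s 2, false, 2) *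
      FreeMonoid.of (s 1, false, 1) * FreeMonoid.of (s 0, false, 0) *
      FreeMonoid.of (s 0, true, 0) * FreeMonoid.of (s 1, true, 1) *
      FreeMonoid.of (s 2, true, 2) * FreeMonoid.of (s 3, true, 3) := rfl

lemma word4_inj {s t : Fin 4 → Bool} (h : word4 s = word4 t) : s = t := by
  have h2 : FreeMonoid.toList (word4 s) = FreeMonoid.toList (word4 t) := by rw [h]
  simp only [word4, FreeMonoid.toList_ofList, List.cons.injEq, Prod.mk.injEq] at h2
  funext i
  fin_cases i <;> tauto


end TestSet

/-- `T₄` is a test set for `L₄`: any two morphisms agreeing on `T₄` agree on `L₄`. -/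
theorem T4_isTestSet_L4 (Γ : Type) (f g : FreeMonoid Sigma4 →* FreeMonoid Γ)
    (h : ∀ w ∈ T4, f w = g w) : ∀ w ∈ L4, f w = g w := by
  intro w hw
  obtain ⟨s, rfl⟩ := hw
  by_cases hs : s = fun _ => true
  · subst hs
    apply TestSet.iota_injective Γ
    set F : FreeMonoid Sigma4 →* FreeGroup Γ := (TestSet.iota Γ).comp f with hF
    set G : FreeMonoid Sigma4 →* FreeGroup Γ := (TestSet.iota Γ).comp g with hG
    show F (word4 _) = G (word4 _)
    have expandF : ∀ (H : FreeMonoid Sigma4 →* FreeGroup Γ) (s : Fin 4 → Bool),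
        H (word4 s) = H (FreeMonoid.of (s 3, false, 3)) * H (FreeMonoid.of (s 2, false, 2)) *
          H (FreeMonoid.of (s 1, false, 1)) * H (FreeMonoid.of (s 0, false, 0)) *
          H (FreeMonoid.of (s 0, true, 0)) * H (FreeMonoid.of (s 1, true, 1)) *
          H (FreeMonoid.of (s 2, true, 2)) * H (FreeMonoid.of (s 3, true, 3)) := by
      intro H s
      rw [TestSet.word4_expand]
      simp only [MonoidHom.map_mul]
    rw [expandF, expandF]
    refine TestSet.core (fun ha hx hy => TestSet.CT ha hx hy) (fun ha hc => TestSet.conj_commute_imp_commute ha hc)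
      (fun c => F (FreeMonoid.of (c, false, 3))) (fun c => F (FreeMonoid.of (c, false, 2)))
      (fun c => F (FreeMonoid.of (c, false, 1))) (fun c => F (FreeMonoid.of (c, false, 0)))
      (fun c => F (FreeMonoid.of (c, true, 0))) (fun c => F (FreeMonoid.of (c, true, 1)))
      (fun c => F (FreeMonoid.of (c, true, 2))) (fun c => F (FreeMonoid.of (c, true, 3)))
      (fun c => G (FreeMonoid.of (c, false, 3))) (fun c => G (FreeMonoid.of (c, false, 2)))
      (fun c => G (FreeMonoid.of (c, false, 1))) (fun c => G (FreeMonoid.of (c, false, 0)))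
      (fun c => G (FreeMonoid.of (c, true, 0))) (fun c => G (FreeMonoid.of (c, true, 1)))
      (fun c => G (FreeMonoid.of (c, true, 2))) (fun c => G (FreeMonoid.of (c, true, 3)))
      ?_
    intro c3 c2 c1 c0 hne
    set s : Fin 4 → Bool := ![c0, c1, c2, c3] with hsdef
    have hsne : s ≠ fun _ => true := by
      intro heq
      apply hne
      refine ⟨?_, ?_, ?_, ?_⟩
      · have := congrFun heq 3; simpa [hsdef] using this
      · have := congrFun heq 2; simpa [hsdef] using this
      · have := congrFun heq 1; simpa [hsdef] using this
      · have := congrFun heq 0; simpa [hsdef] using this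
    have hmem : word4 s ∈ T4 := by
      refine ⟨⟨s, rfl⟩, ?_⟩
      simp only [Set.mem_singleton_iff]
      intro hcontra
      exact hsne (TestSet.word4_inj hcontra)
    have hfg := h (word4 s) hmem
    have hFG : F (word4 s) = G (word4 s) := by
      rw [hF, hG]
      simp only [MonoidHom.comp_apply, hfg]
    rw [expandF F s, expandF G s] at hFG
    have e0 : s 0 = c0 := by simp [hsdef]
    have e1 : s 1 = c1 := by simp [hsdef]
    have e2 : s 2 = c2 := by simp [hsdef]
    have e3 : s 3 = c3 := by simp [hsdef]
    rw [e0, e1, e2, e3] at hFG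
    exact hFG
  · apply h
    refine ⟨⟨s, rfl⟩, ?_⟩
    simp only [Set.mem_singleton_iff]
    intro hcontra
    exact hs (TestSet.word4_inj hcontra)
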